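/- (Convergence of RSGD) Let R_S : ℝ^d → ℝ be differentiable with β-Lipschitz gradient and bounded below by R_S(x_*). On a probability space with filtration (𝔉_t), let (x_t) and (r_t) be adapted sequences of random vectors in ℝ^d with x_0 deterministic and r_0 = 0, and let (g_t) be random vectors with g_t measurable with respect to 𝔉_{t+1}, E[g_t | 𝔉_t] = ∇R_S(x_t − r_t), and E‖g_t‖² ≤ σ² for all t. Suppose the reference-trajectory relation x_{t+1} − r_{t+1} = (x_t − r_t) − γ·g_t holds for all t, for a fixed learning rate γ > 0 with γ ≤ 1/β. Then for every c₁ > 0 and every T ≥ 1, min_{0 ≤ t ≤ T−1} E‖∇R_S(x_t)‖² ≤ (1+c₁)·(R_S(x_0) − R_S(x_*))/(γT) + (1+c₁)·β·γ·σ²/2 + (1 + 1/c₁)·β²·(∑_{t=0}^{T−1} E‖r_t‖²)/T. -/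

import Mathlib

open MeasureTheory

section Aux

variable {d : ℕ}

/-- Descent lemma for β-smooth functions. -/
lemma rsgd_descent (RS : EuclideanSpace ℝ (Fin d) → ℝ) (β : ℝ)
    (hdiff : Differentiable ℝ RS)
    (hsmooth : ∀ x y, ‖gradient RS x - gradient RS y‖ ≤ β * ‖x - y‖)
    (a b : EuclideanSpace ℝ (Fin d)) :
    RS b ≤ RS a + inner ℝ (gradient RS a) (b - a) + β / 2 * ‖b - a‖ ^ 2 := by
  set v := b - a with hv
  have hφ : ∀ t : ℝ, HasDerivAt (fun s : ℝ => RS (a + s • v))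
      (inner ℝ (gradient RS (a + t • v)) v : ℝ) t := by
    intro t
    have h1 : HasDerivAt (fun s : ℝ => a + s • v) v t := by
      simpa using ((hasDerivAt_id t).smul_const v).const_add a
    have h2 := (hdiff (a + t • v)).hasGradientAt.hasFDerivAt
    have h3 := h2.comp_hasDerivAt t h1
    simpa [InnerProductSpace.toDual_apply_apply, Function.comp_def] using h3
  set ψ : ℝ → ℝ := fun t => RS (a + t • v) - t * inner ℝ (gradient RS a) v
      - t ^ 2 * (β / 2 * ‖v‖ ^ 2) with hψdef
  have hψ : ∀ t : ℝ, HasDerivAt ψ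
      ((inner ℝ (gradient RS (a + t • v)) v : ℝ) - inner ℝ (gradient RS a) v
        - (2 * t) * (β / 2 * ‖v‖ ^ 2)) t := by
    intro t
    have h1 : HasDerivAt (fun s : ℝ => s * (inner ℝ (gradient RS a) v : ℝ))
        (inner ℝ (gradient RS a) v : ℝ) t := by
      simpa using (hasDerivAt_id t).mul_const (inner ℝ (gradient RS a) v : ℝ)
    have h2 : HasDerivAt (fun s : ℝ => s ^ 2 * (β / 2 * ‖v‖ ^ 2))
        ((2 * t) * (β / 2 * ‖v‖ ^ 2)) t := by
      simpa using (hasDerivAt_pow 2 t).mul_const (β / 2 * ‖v‖ ^ 2)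
    exact ((hφ t).sub h1).sub h2
  have hanti : AntitoneOn ψ (Set.Icc (0:ℝ) 1) := by
    apply antitoneOn_of_deriv_nonpos (convex_Icc 0 1)
    · exact fun t _ => ((hψ t).differentiableAt).continuousAt.continuousWithinAt
    · exact fun t _ => ((hψ t).differentiableAt).differentiableWithinAt
    · intro t ht
      rw [interior_Icc] at ht
      rw [(hψ t).deriv]
      have h1 : (inner ℝ (gradient RS (a + t • v)) v : ℝ) - inner ℝ (gradient RS a) v
          = inner ℝ (gradient RS (a + t • v) - gradient RS a) v := by
        rw [inner_sub_left]
      rw [h1]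
      have h2 : (inner ℝ (gradient RS (a + t • v) - gradient RS a) v : ℝ)
          ≤ ‖gradient RS (a + t • v) - gradient RS a‖ * ‖v‖ := real_inner_le_norm _ _
      have h3 : ‖gradient RS (a + t • v) - gradient RS a‖ ≤ β * ‖t • v‖ := by
        simpa using hsmooth (a + t • v) a
      have h4 : ‖t • v‖ = t * ‖v‖ := by
        rw [norm_smul, Real.norm_eq_abs, abs_of_pos ht.1]
      rw [h4] at h3
      have h5 : ‖gradient RS (a + t • v) - gradient RS a‖ * ‖v‖ ≤ β * (t * ‖v‖) * ‖v‖ :=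
        mul_le_mul_of_nonneg_right h3 (norm_nonneg v)
      nlinarith [h2, h5]
  have h01 := hanti (Set.mem_Icc.mpr ⟨le_refl 0, zero_le_one⟩)
    (Set.mem_Icc.mpr ⟨zero_le_one, le_refl 1⟩) zero_le_one
  have hψ0 : ψ 0 = RS a := by simp [hψdef]
  have hψ1 : ψ 1 = RS b - inner ℝ (gradient RS a) v - β / 2 * ‖v‖ ^ 2 := by
    simp [hψdef, hv]
  rw [hψ0, hψ1] at h01
  linarith

/-- Conditional expectation commutes with continuous linear maps. -/
lemma condexp_clm_comm {Ω : Type*} {m m0 : MeasurableSpace Ω} (hm : m ≤ m0)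
    {μ : Measure Ω} [IsFiniteMeasure μ]
    {E F : Type*} [NormedAddCommGroup E] [NormedSpace ℝ E] [CompleteSpace E]
    [NormedAddCommGroup F] [NormedSpace ℝ F] [CompleteSpace F]
    (L : E →L[ℝ] F) {g : Ω → E} (hg : Integrable g μ) :
    (fun ω => L ((μ[g|m]) ω)) =ᵐ[μ] μ[fun ω => L (g ω)|m] := by
  have hsf : SigmaFinite (μ.trim hm) := by
    have : IsFiniteMeasure (μ.trim hm) := isFiniteMeasure_trim hm
    infer_instance
  refine ae_eq_condExp_of_forall_setIntegral_eq hm (L.integrable_comp hg)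
    (fun s _ _ => (L.integrable_comp integrable_condExp).integrableOn)
    (fun s hs hμs => ?_)
    ((L.continuous.comp_stronglyMeasurable stronglyMeasurable_condExp).aestronglyMeasurable)
  rw [L.integral_comp_comm integrable_condExp.integrableOn,
    L.integral_comp_comm hg.integrableOn, setIntegral_condExp hm hg hs]

/-- Coordinate bound in Euclidean space. -/
lemma euclid_coord_abs_le {x : EuclideanSpace ℝ (Fin d)} (i : Fin d) : |x i| ≤ ‖x‖ := by
  rw [EuclideanSpace.norm_eq]
  have h1 : |x i| = Real.sqrt (‖x i‖ ^ 2) := by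
    rw [Real.sqrt_sq_eq_abs, Real.norm_eq_abs, abs_abs]
  rw [h1]
  apply Real.sqrt_le_sqrt
  exact Finset.single_le_sum (f := fun j => ‖x j‖ ^ 2)
    (fun j _ => sq_nonneg _) (Finset.mem_univ i)

end Aux

set_option maxHeartbeats 1000000 in
/-- Convergence of RSGD: for β-smooth `R_S` bounded below by `R_S x_*`,
adapted sequences `x t`, `r t` with `x 0 = x0` deterministic and `r 0 = 0`, unbiased
stochastic gradients `g t` at the reference points `x t - r t` with second moment bounded by
σ², and the reference-trajectory relation
`x (t+1) - r (t+1) = (x t - r t) - γ • g t` with `0 < γ ≤ 1/β`, for every `c₁ > 0`, `T ≥ 1`: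
`min_{0 ≤ t < T} E‖∇R_S(x t)‖² ≤ (1+c₁)(R_S(x0) - R_S(x_*))/(γT) + (1+c₁)βγσ²/2
  + (1 + 1/c₁) β² (∑_{t<T} E‖r t‖²)/T`. -/

theorem rsgd_convergence
    {d : ℕ} (RS : EuclideanSpace ℝ (Fin d) → ℝ) (β σ γ : ℝ)
    (xstar x0 : EuclideanSpace ℝ (Fin d))
    (hβ : 0 < β)
    (hdiff : Differentiable ℝ RS)
    (hsmooth : ∀ x y, ‖gradient RS x - gradient RS y‖ ≤ β * ‖x - y‖)
    (hlb : ∀ x, RS xstar ≤ RS x)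
    {Ω : Type*} {m0 : MeasurableSpace Ω} {μ : Measure Ω} [IsProbabilityMeasure μ]
    (ℱ : Filtration ℕ m0)
    (x r g : ℕ → Ω → EuclideanSpace ℝ (Fin d))
    (hxadapted : Adapted ℱ x) (hradapted : Adapted ℱ r)
    (hx0 : ∀ ω, x 0 ω = x0) (hr0 : ∀ ω, r 0 ω = 0)
    (hgmeas : ∀ t, StronglyMeasurable[ℱ (t + 1)] (g t))
    (hgint : ∀ t, Integrable (g t) μ)
    (hgsqint : ∀ t, Integrable (fun ω => ‖g t ω‖ ^ 2) μ)
    (hrsqint : ∀ t, Integrable (fun ω => ‖r t ω‖ ^ 2) μ)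
    (hunbiased : ∀ t, μ[g t | ℱ t] =ᵐ[μ] fun ω => gradient RS (x t ω - r t ω))
    (hsecond : ∀ t, ∫ ω, ‖g t ω‖ ^ 2 ∂μ ≤ σ ^ 2)
    (hreference : ∀ t ω, x (t + 1) ω - r (t + 1) ω = (x t ω - r t ω) - γ • g t ω)
    (hγ0 : 0 < γ) (hγβ : γ ≤ 1 / β)
    (c₁ : ℝ) (hc₁ : 0 < c₁) (T : ℕ) (hT : 1 ≤ T) :
    (Finset.range T).inf' (Finset.nonempty_range_iff.mpr (by omega))
        (fun t => ∫ ω, ‖gradient RS (x t ω)‖ ^ 2 ∂μ)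
      ≤ (1 + c₁) * (RS x0 - RS xstar) / (γ * T) + (1 + c₁) * β * γ * σ ^ 2 / 2
        + (1 + 1 / c₁) * β ^ 2 * (∑ t ∈ Finset.range T, ∫ ω, ‖r t ω‖ ^ 2 ∂μ) / T := by
  classical
  set G := gradient RS with hGdef
  set y : ℕ → Ω → EuclideanSpace ℝ (Fin d) := fun t ω => x t ω - r t ω with hydef
  have hy0 : ∀ ω, y 0 ω = x0 := fun ω => by simp [hydef, hx0, hr0]
  have hystep : ∀ t ω, y (t+1) ω = y t ω - γ • g t ω := fun t ω => hreference t ω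
  have hβ' : (0:ℝ) ≤ β := hβ.le
  have hGcont : Continuous G := by
    have hL : LipschitzWith β.toNNReal G := by
      apply LipschitzWith.of_dist_le_mul
      intro a b
      rw [dist_eq_norm, dist_eq_norm]
      calc ‖G a - G b‖ ≤ β * ‖a - b‖ := hsmooth a b
        _ = β.toNNReal * ‖a - b‖ := by rw [Real.coe_toNNReal β hβ']
    exact hL.continuous
  have hymeas : ∀ t, StronglyMeasurable[ℱ t] (y t) := fun t => ((hxadapted t).sub (hradapted t)).stronglyMeasurable
  have hymeas0 : ∀ t, StronglyMeasurable (y t) := fun t => (hymeas t).mono (ℱ.le t)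
  have hFmeas : ∀ t, StronglyMeasurable fun ω => G (y t ω) := fun t =>
    hGcont.comp_stronglyMeasurable (hymeas0 t)
  have hFmeasF : ∀ t, StronglyMeasurable[ℱ t] fun ω => G (y t ω) := fun t =>
    hGcont.comp_stronglyMeasurable (hymeas t)
  have hgmeas0 : ∀ t, StronglyMeasurable (g t) := fun t => (hgmeas t).mono (ℱ.le (t+1))
  -- integrability of ‖G (y t)‖²
  have hFsq_int : ∀ t, Integrable (fun ω => ‖G (y t ω)‖ ^ 2) μ := by
    intro t
    induction t with
    | zero =>
      have : (fun ω => ‖G (y 0 ω)‖ ^ 2) = fun _ => ‖G x0‖ ^ 2 := by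
        funext ω; rw [hy0 ω]
      rw [this]; exact integrable_const _
    | succ t ih =>
      have hb : Integrable (fun ω => 2 * ‖G (y t ω)‖^2 + 2 * (β*γ)^2 * ‖g t ω‖^2) μ :=
        (ih.const_mul 2).add ((hgsqint t).const_mul _)
      refine hb.mono' ((continuous_pow 2).comp_stronglyMeasurable
        (hFmeas (t+1)).norm).aestronglyMeasurable ?_
      filter_upwards with ω
      have h1 : ‖G (y (t+1) ω) - G (y t ω)‖ ≤ β * ‖y (t+1) ω - y t ω‖ := hsmooth _ _
      have h2 : y (t+1) ω - y t ω = -(γ • g t ω) := by rw [hystep t ω]; abel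
      rw [h2, norm_neg, norm_smul, Real.norm_eq_abs, abs_of_pos hγ0] at h1
      have h3 : ‖G (y (t+1) ω)‖ ≤ ‖G (y t ω)‖ + β * (γ * ‖g t ω‖) := by
        have := norm_le_norm_add_norm_sub' (G (y (t+1) ω)) (G (y t ω))
        linarith
      rw [Real.norm_eq_abs, abs_of_nonneg (by positivity)]
      nlinarith [norm_nonneg (G (y (t+1) ω)), norm_nonneg (G (y t ω)), norm_nonneg (g t ω),
        sq_nonneg (‖G (y t ω)‖ - β * (γ * ‖g t ω‖))]
  -- integrability of inner products
  have hprod_int : ∀ t, Integrable (fun ω => (inner ℝ (G (y t ω)) (g t ω) : ℝ)) μ := by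
    intro t
    have hb : Integrable (fun ω => (‖G (y t ω)‖^2 + ‖g t ω‖^2)/2) μ :=
      ((hFsq_int t).add (hgsqint t)).div_const 2
    refine hb.mono' ((hFmeas t).inner (hgmeas0 t)).aestronglyMeasurable ?_
    filter_upwards with ω
    rw [Real.norm_eq_abs]
    have h1 := abs_real_inner_le_norm (G (y t ω)) (g t ω)
    nlinarith [sq_nonneg (‖G (y t ω)‖ - ‖g t ω‖)]
  have hFg_int : ∀ s t, Integrable (fun ω => ‖G (y s ω)‖ * ‖g t ω‖) μ := by
    intro s t
    have hb : Integrable (fun ω => (‖G (y s ω)‖^2 + ‖g t ω‖^2)/2) μ :=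
      ((hFsq_int s).add (hgsqint t)).div_const 2
    refine hb.mono' ((hFmeas s).norm.mul (hgmeas0 t).norm).aestronglyMeasurable ?_
    filter_upwards with ω
    rw [Real.norm_eq_abs, abs_of_nonneg (by positivity)]
    nlinarith [sq_nonneg (‖G (y s ω)‖ - ‖g t ω‖)]
  -- key identity
  have key : ∀ t, ∫ ω, (inner ℝ (G (y t ω)) (g t ω) : ℝ) ∂μ = ∫ ω, ‖G (y t ω)‖^2 ∂μ := by
    intro t
    have hcoordint : ∀ i : Fin d, Integrable (fun ω => G (y t ω) i * g t ω i) μ := by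
      intro i
      refine (hFg_int t t).mono' ?_ ?_
      · exact (((EuclideanSpace.proj i).continuous.comp_stronglyMeasurable (hFmeas t)).mul
          ((EuclideanSpace.proj i).continuous.comp_stronglyMeasurable (hgmeas0 t))).aestronglyMeasurable
      · filter_upwards with ω
        rw [Real.norm_eq_abs, abs_mul]
        exact mul_le_mul (euclid_coord_abs_le i) (euclid_coord_abs_le i)
          (abs_nonneg _) (norm_nonneg _)
    have hcoordint2 : ∀ i : Fin d, Integrable (fun ω => G (y t ω) i * G (y t ω) i) μ := by
      intro i
      refine (hFsq_int t).mono' ?_ ?_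
      · exact (((EuclideanSpace.proj i).continuous.comp_stronglyMeasurable (hFmeas t)).mul
          ((EuclideanSpace.proj i).continuous.comp_stronglyMeasurable (hFmeas t))).aestronglyMeasurable
      · filter_upwards with ω
        rw [Real.norm_eq_abs, abs_mul]
        have h := euclid_coord_abs_le (x := G (y t ω)) i
        calc |G (y t ω) i| * |G (y t ω) i| ≤ ‖G (y t ω)‖ * ‖G (y t ω)‖ :=
              mul_le_mul h h (abs_nonneg _) (norm_nonneg _)
          _ = ‖G (y t ω)‖ ^ 2 := (sq ‖G (y t ω)‖).symm
    have hcond : ∀ i : Fin d,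
        ∫ ω, G (y t ω) i * g t ω i ∂μ = ∫ ω, G (y t ω) i * G (y t ω) i ∂μ := by
      intro i
      have hgi : Integrable (fun ω => g t ω i) μ := by
        have := (EuclideanSpace.proj (𝕜 := ℝ) i).integrable_comp (hgint t)
        simpa using this
      have h1 : (μ[fun ω => g t ω i | ℱ t]) =ᵐ[μ] fun ω => G (y t ω) i := by
        have h2 := (condexp_clm_comm (ℱ.le t) (EuclideanSpace.proj (𝕜 := ℝ) i) (hgint t)).symm
        have h3 : (fun ω => (EuclideanSpace.proj (𝕜 := ℝ) i) ((μ[g t|ℱ t]) ω)) =ᵐ[μ]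
            fun ω => G (y t ω) i := by
          filter_upwards [hunbiased t] with ω hω
          have hproj : (EuclideanSpace.proj (𝕜 := ℝ) i) ((μ[g t|ℱ t]) ω) = (μ[g t|ℱ t]) ω i := rfl
          rw [hproj, hω]
        exact h2.trans h3
      have h4 : μ[(fun ω => G (y t ω) i) * (fun ω => g t ω i) | ℱ t] =ᵐ[μ]
          (fun ω => G (y t ω) i) * μ[fun ω => g t ω i|ℱ t] := by
        refine condExp_mul_of_stronglyMeasurable_left
          ((EuclideanSpace.proj i).continuous.comp_stronglyMeasurable (hFmeasF t)) ?_ hgi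
        exact hcoordint i
      calc ∫ ω, G (y t ω) i * g t ω i ∂μ
          = ∫ ω, (μ[(fun ω => G (y t ω) i) * (fun ω => g t ω i) | ℱ t]) ω ∂μ :=
            (integral_condExp (ℱ.le t)).symm
        _ = ∫ ω, G (y t ω) i * (μ[fun ω => g t ω i|ℱ t]) ω ∂μ := integral_congr_ae h4
        _ = ∫ ω, G (y t ω) i * G (y t ω) i ∂μ := by
            refine integral_congr_ae ?_
            filter_upwards [h1] with ω hω
            rw [hω]
    have hsum1 : ∀ ω, (inner ℝ (G (y t ω)) (g t ω) : ℝ) = ∑ i, G (y t ω) i * g t ω i := by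
      intro ω
      rw [PiLp.inner_apply]
      simp [RCLike.inner_apply, mul_comm]
    have hsum2 : ∀ ω, ‖G (y t ω)‖^2 = ∑ i, G (y t ω) i * G (y t ω) i := by
      intro ω
      rw [← real_inner_self_eq_norm_sq, PiLp.inner_apply]
      simp [RCLike.inner_apply, pow_two]
    simp_rw [hsum1, hsum2]
    rw [integral_finset_sum _ (fun i _ => hcoordint i),
      integral_finset_sum _ (fun i _ => hcoordint2 i)]
    exact Finset.sum_congr rfl fun i _ => hcond i
  -- pointwise descent
  have hdesc : ∀ t ω, RS (y (t+1) ω) ≤ RS (y t ω) - γ * inner ℝ (G (y t ω)) (g t ω)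
      + β/2 * γ^2 * ‖g t ω‖^2 := by
    intro t ω
    have h := rsgd_descent RS β hdiff hsmooth (y t ω) (y (t+1) ω)
    have h2 : y (t+1) ω - y t ω = -(γ • g t ω) := by rw [hystep]; abel
    rw [h2] at h
    have h3 : (inner ℝ (G (y t ω)) (-(γ • g t ω)) : ℝ) = -(γ * inner ℝ (G (y t ω)) (g t ω)) := by
      rw [inner_neg_right, real_inner_smul_right]
    have h4 : ‖-(γ • g t ω)‖^2 = γ^2 * ‖g t ω‖^2 := by
      rw [norm_neg, norm_smul, Real.norm_eq_abs, mul_pow, sq_abs]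
    rw [h3, h4] at h
    linarith
  have hdesc' : ∀ t ω, RS (y t ω) ≤ RS (y (t+1) ω) + γ * inner ℝ (G (y (t+1) ω)) (g t ω)
      + β/2 * γ^2 * ‖g t ω‖^2 := by
    intro t ω
    have h := rsgd_descent RS β hdiff hsmooth (y (t+1) ω) (y t ω)
    have h2 : y t ω - y (t+1) ω = γ • g t ω := by rw [hystep]; abel
    rw [h2] at h
    have h3 : (inner ℝ (G (y (t+1) ω)) (γ • g t ω) : ℝ) = γ * inner ℝ (G (y (t+1) ω)) (g t ω) :=
      real_inner_smul_right _ _ _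
    have h4 : ‖γ • g t ω‖^2 = γ^2 * ‖g t ω‖^2 := by
      rw [norm_smul, Real.norm_eq_abs, mul_pow, sq_abs]
    rw [h3, h4] at h
    linarith
  -- integrability of RS ∘ y t
  have hRSy_int : ∀ t, Integrable (fun ω => RS (y t ω)) μ := by
    intro t
    induction t with
    | zero =>
      have : (fun ω => RS (y 0 ω)) = fun _ => RS x0 := by funext ω; rw [hy0 ω]
      rw [this]; exact integrable_const _
    | succ t ih =>
      have hBint : Integrable (fun ω => |RS (y t ω)| + (γ * (‖G (y t ω)‖ * ‖g t ω‖)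
          + γ * (‖G (y (t+1) ω)‖ * ‖g t ω‖) + β/2*γ^2 * ‖g t ω‖^2)) μ :=
        ih.abs.add ((((hFg_int t t).const_mul γ).add
          ((hFg_int (t+1) t).const_mul γ)).add ((hgsqint t).const_mul _))
      refine hBint.mono' (hdiff.continuous.comp_stronglyMeasurable
        (hymeas0 (t+1))).aestronglyMeasurable ?_
      filter_upwards with ω
      rw [Real.norm_eq_abs]
      have h1 := hdesc t ω
      have h2 := hdesc' t ω
      have h3 : (inner ℝ (G (y t ω)) (g t ω) : ℝ) ≤ ‖G (y t ω)‖ * ‖g t ω‖ := real_inner_le_norm _ _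
      have h3' : -(‖G (y t ω)‖ * ‖g t ω‖) ≤ (inner ℝ (G (y t ω)) (g t ω) : ℝ) := by
        have := abs_real_inner_le_norm (G (y t ω)) (g t ω)
        have := neg_abs_le (inner ℝ (G (y t ω)) (g t ω) : ℝ)
        linarith
      have h4 : (inner ℝ (G (y (t+1) ω)) (g t ω) : ℝ) ≤ ‖G (y (t+1) ω)‖ * ‖g t ω‖ :=
        real_inner_le_norm _ _
      have hs3 : γ * (inner ℝ (G (y t ω)) (g t ω) : ℝ) ≤ γ * (‖G (y t ω)‖ * ‖g t ω‖) :=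
        mul_le_mul_of_nonneg_left h3 hγ0.le
      have hs3' : -(γ * (‖G (y t ω)‖ * ‖g t ω‖)) ≤ γ * (inner ℝ (G (y t ω)) (g t ω) : ℝ) := by
        have := mul_le_mul_of_nonneg_left h3' hγ0.le
        linarith
      have hs4 : γ * (inner ℝ (G (y (t+1) ω)) (g t ω) : ℝ) ≤ γ * (‖G (y (t+1) ω)‖ * ‖g t ω‖) :=
        mul_le_mul_of_nonneg_left h4 hγ0.le
      have hnn1 : 0 ≤ γ * (‖G (y t ω)‖ * ‖g t ω‖) := by positivity
      have hnn2 : 0 ≤ γ * (‖G (y (t+1) ω)‖ * ‖g t ω‖) := by positivity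
      rw [abs_le]
      constructor
      · have habs := neg_abs_le (RS (y t ω))
        linarith
      · have habs := le_abs_self (RS (y t ω))
        linarith
  -- expectation descent step
  have hstep : ∀ t, ∫ ω, RS (y (t+1) ω) ∂μ ≤ ∫ ω, RS (y t ω) ∂μ
      - γ * ∫ ω, ‖G (y t ω)‖^2 ∂μ + β/2*γ^2*σ^2 := by
    intro t
    have hRHSint : Integrable (fun ω => RS (y t ω) - γ * inner ℝ (G (y t ω)) (g t ω)
        + β/2*γ^2 * ‖g t ω‖^2) μ :=
      ((hRSy_int t).sub ((hprod_int t).const_mul γ)).add ((hgsqint t).const_mul _)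
    have h1 := integral_mono (hRSy_int (t+1)) hRHSint (fun ω => hdesc t ω)
    have ha : Integrable (fun ω => RS (y t ω) - γ * (inner ℝ (G (y t ω)) (g t ω) : ℝ)) μ := by
      exact (hRSy_int t).sub ((hprod_int t).const_mul γ)
    have hb : Integrable (fun ω => β/2*γ^2 * ‖g t ω‖^2) μ := by
      exact (hgsqint t).const_mul _
    have hcmul : Integrable (fun ω => γ * (inner ℝ (G (y t ω)) (g t ω) : ℝ)) μ := by
      exact (hprod_int t).const_mul γ
    rw [integral_add ha hb, integral_sub (hRSy_int t) hcmul,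
      integral_const_mul _ _, integral_const_mul _ _, key t] at h1
    have h2 : β/2*γ^2 * ∫ ω, ‖g t ω‖^2 ∂μ ≤ β/2*γ^2*σ^2 :=
      mul_le_mul_of_nonneg_left (hsecond t) (by positivity)
    linarith
  -- telescoping
  have htel : ∀ n : ℕ, γ * (∑ t ∈ Finset.range n, ∫ ω, ‖G (y t ω)‖^2 ∂μ)
      + ∫ ω, RS (y n ω) ∂μ ≤ RS x0 + n * (β/2*γ^2*σ^2) := by
    intro n
    induction n with
    | zero =>
      have : (fun ω => RS (y 0 ω)) = fun _ => RS x0 := by funext ω; rw [hy0 ω]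
      simp [this]
    | succ n ih =>
      have h1 := hstep n
      rw [Finset.sum_range_succ, Nat.cast_succ]
      have hexp : γ * ((∑ t ∈ Finset.range n, ∫ ω, ‖G (y t ω)‖^2 ∂μ) + ∫ ω, ‖G (y n ω)‖^2 ∂μ)
          = γ * (∑ t ∈ Finset.range n, ∫ ω, ‖G (y t ω)‖^2 ∂μ)
            + γ * ∫ ω, ‖G (y n ω)‖^2 ∂μ := by ring
      rw [hexp]
      linarith
  have hlow : ∀ n : ℕ, RS xstar ≤ ∫ ω, RS (y n ω) ∂μ := by
    intro n
    have h := integral_mono (integrable_const (RS xstar)) (hRSy_int n) (fun ω => hlb (y n ω))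
    simpa using h
  have hsumF : γ * (∑ t ∈ Finset.range T, ∫ ω, ‖G (y t ω)‖^2 ∂μ)
      ≤ (RS x0 - RS xstar) + T * (β/2*γ^2*σ^2) := by
    have h1 := htel T
    have h2 := hlow T
    linarith
  -- comparison of gradients at x vs y
  have hcmp : ∀ t, ∫ ω, ‖G (x t ω)‖^2 ∂μ ≤ (1+c₁) * ∫ ω, ‖G (y t ω)‖^2 ∂μ
      + (1+1/c₁)*β^2 * ∫ ω, ‖r t ω‖^2 ∂μ := by
    intro t
    have hi : Integrable (fun ω => (1+c₁) * ‖G (y t ω)‖^2 + (1+1/c₁)*β^2 * ‖r t ω‖^2) μ :=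
      ((hFsq_int t).const_mul _).add ((hrsqint t).const_mul _)
    have hpt : ∀ ω, ‖G (x t ω)‖^2 ≤ (1+c₁) * ‖G (y t ω)‖^2 + (1+1/c₁)*β^2 * ‖r t ω‖^2 := by
      intro ω
      set A := ‖G (y t ω)‖ with hA
      set B := β * ‖r t ω‖ with hB
      have hN : ‖G (x t ω)‖ ≤ A + B := by
        have h := hsmooth (x t ω) (y t ω)
        have hxy : x t ω - y t ω = r t ω := by simp [hydef]
        rw [hxy] at h
        have := norm_le_norm_add_norm_sub' (G (x t ω)) (G (y t ω))
        linarith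
      have hA0 : 0 ≤ A := norm_nonneg _
      have hB0 : 0 ≤ B := mul_nonneg hβ' (norm_nonneg _)
      have hsq : ‖G (x t ω)‖^2 ≤ (A + B)^2 := by
        have := pow_le_pow_left₀ (norm_nonneg (G (x t ω))) hN 2
        exact this
      have hkey : (A + B)^2 ≤ (1+c₁) * A^2 + (1+1/c₁) * B^2 := by
        rw [← sub_nonneg]
        have heq : (1+c₁) * A^2 + (1+1/c₁) * B^2 - (A + B)^2 = (c₁ * A - B)^2 / c₁ := by
          field_simp
          ring
        rw [heq]
        positivity
      have hBsq : (1+1/c₁) * B^2 = (1+1/c₁)*β^2 * ‖r t ω‖^2 := by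
        rw [hB]; ring
      calc ‖G (x t ω)‖^2 ≤ (A + B)^2 := hsq
        _ ≤ (1+c₁) * A^2 + (1+1/c₁) * B^2 := hkey
        _ = (1+c₁) * ‖G (y t ω)‖^2 + (1+1/c₁)*β^2 * ‖r t ω‖^2 := by rw [hBsq]
    have h1 := integral_mono_of_nonneg (Filter.Eventually.of_forall fun ω => sq_nonneg ‖G (x t ω)‖)
      hi (Filter.Eventually.of_forall hpt)
    have ha : Integrable (fun ω => (1+c₁) * ‖G (y t ω)‖^2) μ := by
      exact (hFsq_int t).const_mul _
    have hb : Integrable (fun ω => (1+1/c₁)*β^2 * ‖r t ω‖^2) μ := by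
      exact (hrsqint t).const_mul _
    rwa [integral_add ha hb, integral_const_mul _ _, integral_const_mul _ _] at h1
  -- finishing
  set I := (Finset.range T).inf' (Finset.nonempty_range_iff.mpr (by omega))
      (fun t => ∫ ω, ‖gradient RS (x t ω)‖ ^ 2 ∂μ) with hIdef
  have hTpos : (0:ℝ) < T := by
    have : (1:ℝ) ≤ T := by exact_mod_cast hT
    linarith
  have hsumI : (T:ℝ) * I ≤ ∑ t ∈ Finset.range T, ∫ ω, ‖G (x t ω)‖^2 ∂μ := by
    calc (T:ℝ) * I = ∑ _t ∈ Finset.range T, I := by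
          rw [Finset.sum_const, Finset.card_range, nsmul_eq_mul]
      _ ≤ ∑ t ∈ Finset.range T, ∫ ω, ‖G (x t ω)‖^2 ∂μ :=
          Finset.sum_le_sum fun t ht => Finset.inf'_le _ ht
  set SF := ∑ t ∈ Finset.range T, ∫ ω, ‖G (y t ω)‖^2 ∂μ with hSF
  set Sr := ∑ t ∈ Finset.range T, ∫ ω, ‖r t ω‖^2 ∂μ with hSr
  have h1 : (T:ℝ) * I ≤ (1+c₁) * SF + (1+1/c₁)*β^2 * Sr := by
    calc (T:ℝ) * I ≤ ∑ t ∈ Finset.range T, ∫ ω, ‖G (x t ω)‖^2 ∂μ := hsumI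
      _ ≤ ∑ t ∈ Finset.range T, ((1+c₁) * ∫ ω, ‖G (y t ω)‖^2 ∂μ
            + (1+1/c₁)*β^2 * ∫ ω, ‖r t ω‖^2 ∂μ) := Finset.sum_le_sum fun t _ => hcmp t
      _ = (1+c₁) * SF + (1+1/c₁)*β^2 * Sr := by
          rw [Finset.sum_add_distrib, ← Finset.mul_sum, ← Finset.mul_sum]
  have hc₁pos : (0:ℝ) < 1 + c₁ := by linarith
  have h2 : SF ≤ ((RS x0 - RS xstar) + T * (β/2*γ^2*σ^2)) / γ := by
    rw [le_div_iff₀ hγ0]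
    nlinarith [hsumF]
  have h3 : (T:ℝ) * I ≤ (1+c₁) * (((RS x0 - RS xstar) + T * (β/2*γ^2*σ^2)) / γ)
      + (1+1/c₁)*β^2 * Sr :=
    h1.trans (add_le_add (mul_le_mul_of_nonneg_left h2 hc₁pos.le) le_rfl)
  have h4 : I ≤ ((1+c₁) * (((RS x0 - RS xstar) + T * (β/2*γ^2*σ^2)) / γ)
      + (1+1/c₁)*β^2 * Sr) / T := by
    rw [le_div_iff₀ hTpos]
    nlinarith [h3]
  have heq : ((1+c₁) * (((RS x0 - RS xstar) + T * (β/2*γ^2*σ^2)) / γ)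
      + (1+1/c₁)*β^2 * Sr) / T
      = (1 + c₁) * (RS x0 - RS xstar) / (γ * T) + (1 + c₁) * β * γ * σ ^ 2 / 2
        + (1 + 1 / c₁) * β ^ 2 * Sr / T := by
    field_simp
  rw [heq] at h4
  exact h4
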